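/- Let n be a natural number and v : Fin n → Fin n → ℝ a valuation matrix. Then there exists a market-clearing price vector p : Fin n → ℝ, i.e., some p together with a permutation σ such that v i (σ i) - p (σ i) ≥ v i k - p k for all i and k. -/

import Mathlib

open Finset

namespace Stmt16Aux

variable {n : ℕ}

/-- Sum of edge weights around a simple cycle is nonpositive. -/
lemma cycle_nonpos (w : Fin n → Fin n → ℝ)
    (hdiag : ∀ j, w j j = 0)
    (hperm : ∀ τ : Equiv.Perm (Fin n), ∑ j, w j (τ j) ≤ 0)
    (m : ℕ) (hm : 1 ≤ m) (c : ℕ → Fin n)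
    (hinj : ∀ s < m, ∀ t < m, c s = c t → s = t)
    (hclose : c m = c 0) :
    ∑ s ∈ Finset.range m, w (c s) (c (s + 1)) ≤ 0 := by
  set L : List (Fin n) := (List.range m).map c with hL
  have hlen : L.length = m := by simp [hL]
  have hget : ∀ t (ht : t < L.length), L[t] = c t := by
    intro t ht
    simp [hL]
  have hnodup : L.Nodup := by
    refine List.Nodup.map_on ?_ List.nodup_range
    intro x hx y hy hxy
    exact hinj x (List.mem_range.mp hx) y (List.mem_range.mp hy) hxy
  set τ := L.formPerm with hτ
  have happ : ∀ t, t < m → τ (c t) = c (t + 1) := by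
    intro t ht
    have ht' : t < L.length := by rw [hlen]; exact ht
    have h2 := List.formPerm_apply_getElem L hnodup t ht'
    rw [hget t ht'] at h2
    show L.formPerm (c t) = c (t + 1)
    rw [h2]
    have hlt : (t + 1) % L.length < L.length := Nat.mod_lt _ (by omega)
    rw [hget _ hlt, hlen]
    rcases Nat.lt_or_ge (t + 1) m with h | h
    · rw [Nat.mod_eq_of_lt h]
    · have h' : t + 1 = m := by omega
      rw [h', Nat.mod_self, ← hclose]
  -- rewrite the cycle sum as a sum over the permutation
  have key : ∑ s ∈ Finset.range m, w (c s) (c (s + 1)) = ∑ j, w j (τ j) := by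
    have h1 : ∑ s ∈ Finset.range m, w (c s) (c (s + 1))
        = ∑ s ∈ Finset.range m, w (c s) (τ (c s)) := by
      refine Finset.sum_congr rfl ?_
      intro s hs
      rw [happ s (Finset.mem_range.mp hs)]
    have h2 : ∑ s ∈ Finset.range m, w (c s) (τ (c s))
        = ∑ j ∈ (Finset.range m).image c, w j (τ j) := by
      rw [Finset.sum_image]
      intro x hx y hy hxy
      exact hinj x (Finset.mem_range.mp hx) y (Finset.mem_range.mp hy) hxy
    have h3 : ∑ j ∈ (Finset.range m).image c, w j (τ j) = ∑ j, w j (τ j) := by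
      refine Finset.sum_subset (Finset.subset_univ _) ?_
      intro x _ hx
      have hxL : x ∉ L := by
        intro hxl
        apply hx
        rw [hL] at hxl
        rcases List.mem_map.mp hxl with ⟨t, htr, hct⟩
        exact Finset.mem_image.mpr ⟨t, by simpa using htr, hct⟩
      rw [hτ, List.formPerm_apply_of_notMem hxL, hdiag]
    rw [h1, h2, h3]
  rw [key]
  exact hperm τ

/-- Bellman iteration: best walk weight of length at most `t` ending at `k`. -/
noncomputable def bell (hn : 0 < n) (w : Fin n → Fin n → ℝ) : ℕ → Fin n → ℝ
  | 0 => fun _ => 0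
  | (t + 1) => fun k => max (bell hn w t k)
      ((Finset.univ : Finset (Fin n)).sup' ⟨⟨0, hn⟩, Finset.mem_univ _⟩
        fun j => bell hn w t j + w j k)

lemma bell_mono (hn : 0 < n) (w : Fin n → Fin n → ℝ) {t t' : ℕ} (h : t ≤ t') (k : Fin n) :
    bell hn w t k ≤ bell hn w t' k := by
  induction t' with
  | zero => simp_all
  | succ t' ih =>
    rcases Nat.lt_or_ge t (t' + 1) with h' | h'
    · exact (ih (Nat.lt_succ_iff.mp h')).trans (le_max_left _ _)
    · have : t = t' + 1 := le_antisymm h h'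
      subst this; rfl

lemma walk_le (hn : 0 < n) (w : Fin n → Fin n → ℝ) (m : ℕ) (c : ℕ → Fin n) :
    ∑ s ∈ Finset.range m, w (c s) (c (s + 1)) ≤ bell hn w m (c m) := by
  induction m with
  | zero => simp [bell]
  | succ m ih =>
    rw [Finset.sum_range_succ]
    have h1 : bell hn w m (c m) + w (c m) (c (m + 1))
        ≤ (Finset.univ : Finset (Fin n)).sup' ⟨⟨0, hn⟩, Finset.mem_univ _⟩
          (fun j => bell hn w m j + w j (c (m + 1))) :=
      Finset.le_sup' (fun j => bell hn w m j + w j (c (m + 1))) (Finset.mem_univ (c m))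
    calc ∑ s ∈ Finset.range m, w (c s) (c (s + 1)) + w (c m) (c (m + 1))
        ≤ bell hn w m (c m) + w (c m) (c (m + 1)) := by linarith
      _ ≤ _ := h1.trans (le_max_right _ _)

lemma bell_attained (hn : 0 < n) (w : Fin n → Fin n → ℝ) (t : ℕ) (k : Fin n) :
    ∃ m ≤ t, ∃ c : ℕ → Fin n, c m = k ∧
      bell hn w t k = ∑ s ∈ Finset.range m, w (c s) (c (s + 1)) := by
  induction t generalizing k with
  | zero => exact ⟨0, le_refl 0, fun _ => k, rfl, by simp [bell]⟩
  | succ t ih =>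
    by_cases hcase :
        ((Finset.univ : Finset (Fin n)).sup' ⟨⟨0, hn⟩, Finset.mem_univ _⟩
          fun j => bell hn w t j + w j k) ≤ bell hn w t k
    · obtain ⟨m, hm, c, hc, heq⟩ := ih k
      exact ⟨m, hm.trans (Nat.le_succ t), c, hc, by
        show max _ _ = _
        rw [max_eq_left hcase, heq]⟩
    · push_neg at hcase
      obtain ⟨j, _, hj⟩ := Finset.exists_mem_eq_sup'
        (⟨⟨0, hn⟩, Finset.mem_univ _⟩ : (Finset.univ : Finset (Fin n)).Nonempty)
        (fun j => bell hn w t j + w j k)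
      obtain ⟨m, hm, c, hc, heq⟩ := ih j
      refine ⟨m + 1, Nat.succ_le_succ hm, fun s => if s ≤ m then c s else k, ?_, ?_⟩
      · simp
      · show max _ _ = _
        rw [max_eq_right hcase.le, hj]
        simp only [Finset.sum_range_succ]
        have h1 : ∑ s ∈ Finset.range m,
            w (if s ≤ m then c s else k) (if s + 1 ≤ m then c (s + 1) else k)
            = ∑ s ∈ Finset.range m, w (c s) (c (s + 1)) := by
          refine Finset.sum_congr rfl ?_
          intro s hs
          have hs' := Finset.mem_range.mp hs
          rw [if_pos hs'.le, if_pos (show s + 1 ≤ m from hs')]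
        rw [h1, if_pos (le_refl m), if_neg (by omega), hc, heq]

/-- Stabilization: with no positive simple cycles, `bell (n+1) ≤ bell n`. -/
lemma bell_stab (hn : 0 < n) (w : Fin n → Fin n → ℝ)
    (hdiag : ∀ j, w j j = 0)
    (hperm : ∀ τ : Equiv.Perm (Fin n), ∑ j, w j (τ j) ≤ 0)
    (k : Fin n) : bell hn w (n + 1) k ≤ bell hn w n k := by
  obtain ⟨m, hm, c, hck, heq⟩ := bell_attained hn w (n + 1) k
  rcases le_or_gt m n with hmn | hmn
  · rw [heq]
    exact (walk_le hn w m c).trans (by rw [hck]; exact bell_mono hn w hmn k)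
  · have hmeq : m = n + 1 := le_antisymm hm hmn
    -- pigeonhole: find first repetition
    have hrep : ∃ b, (∃ a < b, c a = c b) ∧ b ≤ m := by
      obtain ⟨x, y, hxy, hcxy⟩ :=
        Fintype.exists_ne_map_eq_of_card_lt (fun i : Fin (n + 1) => c i)
          (by simp)
      rcases Ne.lt_or_gt (fun h => hxy (Fin.ext h) : (x : ℕ) ≠ y) with h | h
      · exact ⟨y, ⟨x, h, hcxy⟩, by omega⟩
      · exact ⟨x, ⟨y, h, hcxy.symm⟩, by omega⟩
    classical
    obtain ⟨b₀, hb₀, hb₀m⟩ := hrep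
    have hex : ∃ b, ∃ a < b, c a = c b := ⟨b₀, hb₀⟩
    set b := Nat.find hex with hbdef
    obtain ⟨a, hab, hcab⟩ : ∃ a < b, c a = c b := Nat.find_spec hex
    have hbm : b ≤ m := le_trans (Nat.find_min' hex hb₀) hb₀m
    have hinj0 : ∀ s < b, ∀ t < b, c s = c t → s = t := by
      intro s hs t ht hst
      by_contra hne
      rcases Ne.lt_or_gt hne with h | h
      · exact Nat.find_min hex ht ⟨s, h, hst⟩
      · exact Nat.find_min hex hs ⟨t, h, hst.symm⟩
    set ℓ := b - a with hℓ
    have hℓ1 : 1 ≤ ℓ := by omega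
    have haℓ : a + ℓ = b := by omega
    -- inner simple cycle
    have hinner : ∑ s ∈ Finset.range ℓ, w (c (a + s)) (c (a + s + 1)) ≤ 0 := by
      refine cycle_nonpos w hdiag hperm ℓ hℓ1 (fun s => c (a + s)) ?_ ?_
      · intro s hs t ht hst
        have := hinj0 (a + s) (by omega) (a + t) (by omega) hst
        omega
      · show c (a + ℓ) = c (a + 0)
        rw [haℓ, Nat.add_zero]
        exact hcab.symm
    -- outer walk
    set m' := m - ℓ with hm'
    have ham' : a ≤ m' := by omega
    have hm'n : m' ≤ n := by omega
    set c' : ℕ → Fin n := fun s => if s ≤ a then c s else c (s + ℓ) with hc'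
    have hc'end : c' m' = k := by
      have h1 : c' m' = c m := by
        show (if m' ≤ a then c m' else c (m' + ℓ)) = c m
        by_cases h : m' ≤ a
        · have h2 : m' = a := le_antisymm h ham'
          rw [if_pos h, h2, hcab]
          congr 1
          omega
        · rw [if_neg h]
          congr 1
          omega
      rw [h1, hck]
    have houter : ∑ s ∈ Finset.range m', w (c' s) (c' (s + 1))
        = ∑ s ∈ Finset.range m, w (c s) (c (s + 1))
          - ∑ s ∈ Finset.range ℓ, w (c (a + s)) (c (a + s + 1)) := by
      have split1 : ∑ s ∈ Finset.range m, w (c s) (c (s + 1))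
          = ∑ s ∈ Finset.range a, w (c s) (c (s + 1))
            + ∑ s ∈ Finset.Ico a b, w (c s) (c (s + 1))
            + ∑ s ∈ Finset.Ico b m, w (c s) (c (s + 1)) := by
        rw [Finset.range_eq_Ico,
          ← Finset.sum_Ico_consecutive _ (Nat.zero_le a) (le_of_lt (by omega) : a ≤ m),
          ← Finset.sum_Ico_consecutive _ (le_of_lt hab : a ≤ b) hbm,
          ← Finset.range_eq_Ico]
        ring
      have hIab : ∑ s ∈ Finset.Ico a b, w (c s) (c (s + 1))
          = ∑ s ∈ Finset.range ℓ, w (c (a + s)) (c (a + s + 1)) := by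
        rw [Finset.sum_Ico_eq_sum_range]
      have split2 : ∑ s ∈ Finset.range m', w (c' s) (c' (s + 1))
          = ∑ s ∈ Finset.range a, w (c' s) (c' (s + 1))
            + ∑ s ∈ Finset.Ico a m', w (c' s) (c' (s + 1)) := by
        rw [Finset.range_eq_Ico,
          ← Finset.sum_Ico_consecutive _ (Nat.zero_le a) ham', ← Finset.range_eq_Ico]
      have heq1 : ∑ s ∈ Finset.range a, w (c' s) (c' (s + 1))
          = ∑ s ∈ Finset.range a, w (c s) (c (s + 1)) := by
        refine Finset.sum_congr rfl ?_
        intro s hs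
        have hs' := Finset.mem_range.mp hs
        rw [hc']
        simp only [if_pos (le_of_lt hs'), if_pos (Nat.succ_le_of_lt hs')]
      have heq2 : ∑ s ∈ Finset.Ico a m', w (c' s) (c' (s + 1))
          = ∑ s ∈ Finset.Ico b m, w (c s) (c (s + 1)) := by
        rw [Finset.sum_Ico_eq_sum_range, Finset.sum_Ico_eq_sum_range]
        refine Finset.sum_congr (by rw [(by omega : m' - a = m - b)]) ?_
        intro s _
        show w (c' (a + s)) (c' (a + s + 1)) = w (c (b + s)) (c (b + s + 1))
        have h2 : c' (a + s + 1) = c (b + s + 1) := by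
          show (if a + s + 1 ≤ a then c (a + s + 1) else c (a + s + 1 + ℓ)) = c (b + s + 1)
          rw [if_neg (by omega : ¬ a + s + 1 ≤ a)]
          congr 1
          omega
        have h3 : c' (a + s) = c (b + s) := by
          show (if a + s ≤ a then c (a + s) else c (a + s + ℓ)) = c (b + s)
          rcases Nat.eq_zero_or_pos s with h | h
          · subst h
            simp only [Nat.add_zero]
            rw [if_pos le_rfl, hcab]
          · rw [if_neg (by omega : ¬ a + s ≤ a)]
            congr 1
            omega
        rw [h2, h3]
      rw [split2, heq1, heq2, split1, hIab]
      ring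
    have houter_le : ∑ s ∈ Finset.range m', w (c' s) (c' (s + 1)) ≤ bell hn w n k := by
      refine (walk_le hn w m' c').trans ?_
      rw [hc'end]
      exact bell_mono hn w hm'n k
    rw [heq]
    have := houter
    linarith

/-- Existence of a potential when there are no positive cycles. -/
lemma exists_potential (hn : 0 < n) (w : Fin n → Fin n → ℝ)
    (hdiag : ∀ j, w j j = 0)
    (hperm : ∀ τ : Equiv.Perm (Fin n), ∑ j, w j (τ j) ≤ 0) :
    ∃ p : Fin n → ℝ, ∀ j k, p j + w j k ≤ p k := by
  refine ⟨bell hn w n, fun j k => ?_⟩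
  have h1 : bell hn w n j + w j k
      ≤ (Finset.univ : Finset (Fin n)).sup' ⟨⟨0, hn⟩, Finset.mem_univ _⟩
        (fun j => bell hn w n j + w j k) :=
    Finset.le_sup' (fun j => bell hn w n j + w j k) (Finset.mem_univ j)
  have h2 : ((Finset.univ : Finset (Fin n)).sup' ⟨⟨0, hn⟩, Finset.mem_univ _⟩
        (fun j => bell hn w n j + w j k)) ≤ bell hn w (n + 1) k :=
    le_max_right _ _
  exact h1.trans (h2.trans (bell_stab hn w hdiag hperm k))

end Stmt16Aux

/-- For every valuation matrix there exists a market-clearing price vector. -/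
theorem stmt_16 (n : ℕ) (v : Fin n → Fin n → ℝ) :
    ∃ (p : Fin n → ℝ) (σ : Equiv.Perm (Fin n)),
      ∀ i k, v i (σ i) - p (σ i) ≥ v i k - p k := by
  rcases Nat.eq_zero_or_pos n with hn | hn
  · subst hn
    exact ⟨fun _ => 0, 1, fun i => i.elim0⟩
  · -- choose a welfare-maximizing assignment
    obtain ⟨σ, hσ⟩ := Finite.exists_max (fun σ : Equiv.Perm (Fin n) => ∑ i, v i (σ i))
    set w : Fin n → Fin n → ℝ := fun j k => v (σ.symm j) k - v (σ.symm j) j with hw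
    have hdiag : ∀ j, w j j = 0 := fun j => sub_self _
    have hperm : ∀ τ : Equiv.Perm (Fin n), ∑ j, w j (τ j) ≤ 0 := by
      intro τ
      have hre : ∑ j, w j (τ j) = ∑ i, w (σ i) (τ (σ i)) :=
        (Equiv.sum_comp σ (fun j => w j (τ j))).symm
      have hre2 : ∑ i, w (σ i) (τ (σ i))
          = (∑ i, v i ((τ * σ) i)) - ∑ i, v i (σ i) := by
        rw [← Finset.sum_sub_distrib]
        refine Finset.sum_congr rfl fun i _ => ?_
        simp [hw, Equiv.Perm.mul_apply]
      rw [hre, hre2, sub_nonpos]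
      exact hσ (τ * σ)
    obtain ⟨p, hp⟩ := Stmt16Aux.exists_potential hn w hdiag hperm
    refine ⟨p, σ, fun i k => ?_⟩
    have := hp (σ i) k
    have hwk : w (σ i) k = v i k - v i (σ i) := by
      simp [hw]
    rw [hwk] at this
    linarith
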